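/- For each sufficiently large natural number k, the equation log x - log(log x) = (x₀ + k) log q has a solution x_k > e, and x_k / (k q^k) → q^{x₀} log q as k → ∞. -/

import Mathlib

open Real Filter

lemma log_le_half {y : ℝ} (hy : 0 < y) : Real.log y ≤ y / 2 := by
  have h1 : y / 4 + 1 ≤ Real.exp (y / 4) := Real.add_one_le_exp _
  have h2 : (y / 4 + 1) ^ 2 ≤ Real.exp (y / 4) ^ 2 := by
    apply pow_le_pow_left₀ (by positivity) h1 2
  have h3 : Real.exp (y / 4) ^ 2 = Real.exp (y / 2) := by
    rw [← Real.exp_nat_mul]; ring_nf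
  have h4 : y ≤ Real.exp (y / 2) := by nlinarith [sq_nonneg (y / 4 - 1)]
  calc Real.log y ≤ Real.log (Real.exp (y / 2)) := Real.log_le_log hy h4
    _ = y / 2 := Real.log_exp _

lemma exists_sol (c : ℝ) (hc : 2 ≤ c) :
    ∃ x : ℝ, Real.exp 1 < x ∧ Real.log x - Real.log (Real.log x) = c := by
  set f : ℝ → ℝ := fun t => Real.log t - Real.log (Real.log t) with hf
  have hab : Real.exp 1 ≤ Real.exp (2 * c) := Real.exp_le_exp.mpr (by linarith)
  have hcont : ContinuousOn f (Set.Icc (Real.exp 1) (Real.exp (2 * c))) := by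
    intro t ht
    have ht0 : (0 : ℝ) < t := lt_of_lt_of_le (Real.exp_pos 1) ht.1
    have hlt : 1 ≤ Real.log t := by
      rw [← Real.log_exp 1]; exact Real.log_le_log (Real.exp_pos 1) ht.1
    exact (((Real.continuousAt_log ht0.ne').sub
      ((Real.continuousAt_log (by linarith)).comp (Real.continuousAt_log ht0.ne'))).continuousWithinAt)
  have hflog : Real.log (2 * c) ≤ c := by
    have := log_le_half (y := 2 * c) (by linarith)
    linarith
  have hmem : c ∈ Set.Icc (f (Real.exp 1)) (f (Real.exp (2 * c))) := by
    constructor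
    · simp only [hf, Real.log_exp, Real.log_one]
      linarith
    · simp only [hf, Real.log_exp]
      linarith
  obtain ⟨x, hx, hfx⟩ := intermediate_value_Icc hab hcont hmem
  refine ⟨x, ?_, hfx⟩
  rcases eq_or_lt_of_le hx.1 with h | h
  · exfalso
    rw [← h] at hfx
    simp only [hf, Real.log_exp, Real.log_one] at hfx
    linarith
  · exact h

lemma sol_bounds {c x : ℝ} (hc : 2 ≤ c) (hx : Real.exp 1 < x)
    (heq : Real.log x - Real.log (Real.log x) = c) :
    c ≤ Real.log x ∧ Real.log x ≤ c + Real.log (2 * c) := by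
  have hy1 : 1 < Real.log x := by
    rw [← Real.log_exp 1]
    exact Real.log_lt_log (Real.exp_pos 1) hx
  have hy0 : 0 < Real.log x := by linarith
  have hlogy : 0 < Real.log (Real.log x) := Real.log_pos hy1
  have hlower : c ≤ Real.log x := by linarith
  have hhalf : Real.log (Real.log x) ≤ Real.log x / 2 := log_le_half hy0
  have h2c : Real.log x ≤ 2 * c := by linarith
  have : Real.log (Real.log x) ≤ Real.log (2 * c) := Real.log_le_log hy0 h2c
  exact ⟨hlower, by linarith⟩

theorem zeros_existence_and_limit (q x₀ : ℝ) (hq : 1 < q) (hx₀ : 0 < x₀) :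
    ∃ K : ℕ, ∃ x : ℕ → ℝ,
      (∀ k : ℕ, K ≤ k → Real.exp 1 < x k ∧
        Real.log (x k) - Real.log (Real.log (x k)) = (x₀ + k) * Real.log q) ∧
      Filter.Tendsto (fun k : ℕ => x k / ((k : ℝ) * q ^ k)) Filter.atTop
        (nhds (q ^ x₀ * Real.log q)) := by
  have hlq : 0 < Real.log q := Real.log_pos hq
  have hq0 : (0 : ℝ) < q := lt_trans one_pos hq
  set c : ℕ → ℝ := fun k => (x₀ + k) * Real.log q with hcdef
  -- K such that c k ≥ 2 eventually
  obtain ⟨K, hK⟩ := exists_nat_ge (2 / Real.log q)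
  have hcK : ∀ k : ℕ, K ≤ k → 2 ≤ c k := by
    intro k hk
    have h1 : 2 / Real.log q ≤ (k : ℝ) := le_trans hK (Nat.cast_le.mpr hk)
    have h2 : 2 ≤ (k : ℝ) * Real.log q := (div_le_iff₀ hlq).mp h1
    have h3 : (k : ℝ) * Real.log q ≤ (x₀ + k) * Real.log q := by nlinarith
    simp only [hcdef]
    linarith
  classical
  set x : ℕ → ℝ := fun k => if h : 2 ≤ c k then (exists_sol (c k) h).choose else Real.exp 2
    with hxdef
  have hxspec : ∀ k : ℕ, 2 ≤ c k →
      Real.exp 1 < x k ∧ Real.log (x k) - Real.log (Real.log (x k)) = c k := by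
    intro k hk
    simp only [hxdef, dif_pos hk]
    exact (exists_sol (c k) hk).choose_spec
  refine ⟨K, x, fun k hk => hxspec k (hcK k hk), ?_⟩
  -- key limit : log (x k) / k → log q
  have hlog_div : Tendsto (fun k : ℕ => Real.log (x₀ + k) / k) atTop (nhds 0) := by
    have h1 : Tendsto (fun t : ℝ => Real.log t / t) atTop (nhds 0) :=
      Real.isLittleO_log_id_atTop.tendsto_div_nhds_zero
    have h2 : Tendsto (fun k : ℕ => x₀ + (k : ℝ)) atTop atTop :=
      tendsto_atTop_add_const_left atTop x₀ tendsto_natCast_atTop_atTop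
    have h3 : Tendsto (fun k : ℕ => Real.log (x₀ + k) / (x₀ + k)) atTop (nhds 0) :=
      h1.comp h2
    have h4 : Tendsto (fun k : ℕ => (x₀ + (k : ℝ)) / k) atTop (nhds 1) := by
      have h5 : Tendsto (fun k : ℕ => x₀ / (k : ℝ) + 1) atTop (nhds 1) := by
        have := (tendsto_const_nhds (x := x₀) (f := atTop (α := ℕ))).div_atTop
          tendsto_natCast_atTop_atTop
        simpa using this.add (tendsto_const_nhds (x := (1:ℝ)))
      apply h5.congr'
      filter_upwards [eventually_ge_atTop 1] with k hk1
      have hk0 : (0 : ℝ) < (k : ℝ) := by exact_mod_cast hk1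
      field_simp
    have := h3.mul h4
    rw [zero_mul] at this
    apply this.congr
    intro k
    have hk0 : (0 : ℝ) < x₀ + k := by positivity
    field_simp
  have hcdiv : Tendsto (fun k : ℕ => c k / k) atTop (nhds (Real.log q)) := by
    have h5 : Tendsto (fun k : ℕ => (x₀ / (k : ℝ) + 1) * Real.log q) atTop
        (nhds (Real.log q)) := by
      have := (tendsto_const_nhds (x := x₀) (f := atTop (α := ℕ))).div_atTop
        tendsto_natCast_atTop_atTop
      have h6 := (this.add (tendsto_const_nhds (x := (1:ℝ)))).mul_const (Real.log q)
      simpa using h6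
    apply h5.congr'
    filter_upwards [eventually_ge_atTop 1] with k hk1
    have hk0 : (0 : ℝ) < (k : ℝ) := by exact_mod_cast hk1
    simp only [hcdef]
    field_simp
  have hlog2c : Tendsto (fun k : ℕ => Real.log (2 * c k) / k) atTop (nhds 0) := by
    have h1 : Tendsto (fun k : ℕ => Real.log (2 * Real.log q) / (k : ℝ)) atTop (nhds 0) :=
      tendsto_const_nhds.div_atTop tendsto_natCast_atTop_atTop
    have h2 := h1.add hlog_div
    rw [add_zero] at h2
    apply h2.congr
    intro k
    have hk0 : (0 : ℝ) < x₀ + k := by positivity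
    have : 2 * c k = (2 * Real.log q) * (x₀ + k) := by simp only [hcdef]; ring
    rw [this, Real.log_mul (by positivity) hk0.ne', ← add_div]
  have hupper : Tendsto (fun k : ℕ => (c k + Real.log (2 * c k)) / k) atTop
      (nhds (Real.log q)) := by
    have := hcdiv.add hlog2c
    rw [add_zero] at this
    apply this.congr
    intro k
    rw [← add_div]
  have hy : Tendsto (fun k : ℕ => Real.log (x k) / k) atTop (nhds (Real.log q)) := by
    apply tendsto_of_tendsto_of_tendsto_of_le_of_le' hcdiv hupper
    · filter_upwards [eventually_ge_atTop K] with k hk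
      have hck := hcK k hk
      obtain ⟨hx1, hx2⟩ := hxspec k hck
      have hbd := (sol_bounds hck hx1 hx2).1
      gcongr
    · filter_upwards [eventually_ge_atTop K] with k hk
      have hck := hcK k hk
      obtain ⟨hx1, hx2⟩ := hxspec k hck
      have hbd := (sol_bounds hck hx1 hx2).2
      gcongr
  -- conclude
  have hfinal := hy.const_mul (q ^ x₀ : ℝ)
  apply hfinal.congr'
  filter_upwards [eventually_ge_atTop K, eventually_ge_atTop 1] with k hk hk1
  have hck := hcK k hk
  obtain ⟨hx1, hx2⟩ := hxspec k hck
  have hy1 : 1 < Real.log (x k) := by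
    rw [← Real.log_exp 1]
    exact Real.log_lt_log (Real.exp_pos 1) hx1
  have hx0 : (0 : ℝ) < x k := lt_trans (Real.exp_pos 1) hx1
  have hxeq : x k = Real.log (x k) * Real.exp (c k) := by
    have : Real.log (x k) = Real.log (Real.log (x k)) + c k := by linarith
    calc x k = Real.exp (Real.log (x k)) := (Real.exp_log hx0).symm
      _ = Real.exp (Real.log (Real.log (x k)) + c k) := by rw [← this]
      _ = Real.log (x k) * Real.exp (c k) := by
          rw [Real.exp_add, Real.exp_log (by linarith)]
  have hexpc : Real.exp (c k) = q ^ x₀ * q ^ k := by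
    simp only [hcdef]
    rw [mul_comm, ← Real.rpow_def_of_pos hq0, Real.rpow_add hq0, Real.rpow_natCast]
  have hqk : (0 : ℝ) < q ^ k := by positivity
  conv_rhs => rw [hxeq, hexpc]
  have hk0 : (0 : ℝ) < (k : ℝ) := by exact_mod_cast hk1
  field_simp
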